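/- Let F be a field, n ≥ 3, and let M be a linear subspace of Mat_n(F) containing all matrices with zero diagonal. If F has at least 3 elements, then M contains a matrix with at least 3 distinct eigenvalues in F; in particular M is not 2-spec. -/

import Mathlib

open Polynomial Matrix

/-- An eigenvalue (witnessed by a nonzero eigenvector) is a root of the charpoly. -/
lemma isRoot_charpoly_of_eigen {F : Type*} [Field F] {n : ℕ} (A : Matrix (Fin n) (Fin n) F)
    (μ : F) (v : Fin n → F) (hv : v ≠ 0) (h : A.mulVec v = μ • v) : A.charpoly.IsRoot μ := by
  have h1 : Polynomial.eval μ A.charpoly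
      = ((A.charmatrix).map (Polynomial.evalRingHom μ)).det := by
    rw [Matrix.charpoly]
    exact RingHom.map_det (Polynomial.evalRingHom μ) _
  have h2 : (A.charmatrix).map (Polynomial.evalRingHom μ)
      = Matrix.diagonal (fun _ => μ) - A := by
    ext i j
    by_cases hij : i = j
    · subst hij; simp [Matrix.charmatrix_apply_eq]
    · simp [Matrix.charmatrix_apply_ne _ _ _ hij, Matrix.diagonal_apply_ne _ hij]
  have h3 : (Matrix.diagonal (fun _ => μ) - A).mulVec v = 0 := by
    funext i
    have := congrFun h i
    simp only [Matrix.sub_mulVec, Pi.sub_apply, Matrix.mulVec_diagonal, this,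
      Pi.smul_apply, smul_eq_mul, Pi.zero_apply]
    ring
  have h4 : (Matrix.diagonal (fun _ => μ) - A).det = 0 :=
    Matrix.exists_mulVec_eq_zero_iff.mp ⟨v, hv, h3⟩
  rw [Polynomial.IsRoot, h1, h2, h4]

/-- In a field with at least 3 elements there are three distinct elements summing to zero. -/
lemma exists_three_sum_zero {F : Type*} [Field F] (hF : 3 ≤ Cardinal.mk F) :
    ∃ a b c : F, a ≠ b ∧ a ≠ c ∧ b ≠ c ∧ a + b + c = 0 := by
  by_cases h2 : (2 : F) = 0
  · -- characteristic 2
    have ht : ∃ t : F, t ≠ 0 ∧ t ≠ 1 := by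
      by_contra hcon
      push_neg at hcon
      have hsub : (Set.univ : Set F) ⊆ {0, 1} := by
        intro t _
        rcases eq_or_ne t 0 with h | h
        · exact Or.inl h
        · exact Or.inr (hcon t h)
      have hle : Cardinal.mk F ≤ 2 := by
        calc Cardinal.mk F = Cardinal.mk (Set.univ : Set F) := Cardinal.mk_univ.symm
          _ ≤ Cardinal.mk ({0, 1} : Set F) := Cardinal.mk_le_mk_of_subset hsub
          _ ≤ Cardinal.mk ({1} : Set F) + 1 := Cardinal.mk_insert_le
          _ = 2 := by rw [Cardinal.mk_singleton]; norm_num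
      have : (3 : Cardinal) ≤ 2 := hF.trans hle
      norm_num at this
    obtain ⟨t, ht0, ht1⟩ := ht
    refine ⟨1, t, 1 + t, fun h => ht1 h.symm, ?_, ?_, by linear_combination (1 + t) * h2⟩
    · intro h; exact ht0 (by linear_combination -h)
    · intro h; exact one_ne_zero (α := F) (by linear_combination -h)
  · refine ⟨1, -1, 0, ?_, one_ne_zero, ?_, by ring⟩
    · intro h; exact h2 (by linear_combination h)
    · intro h; exact one_ne_zero (α := F) (by linear_combination -h)

/-- If n ≥ 3, |F| ≥ 3 and a linear subspace of Matₙ(F) contains all matrices with zero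
diagonal, then it contains a matrix with at least 3 distinct eigenvalues in F; in
particular it is not 2-spec. -/
theorem stmt7 {F : Type*} [Field F] {n : ℕ} (hn : 3 ≤ n) (hF : 3 ≤ Cardinal.mk F)
    (S : Submodule F (Matrix (Fin n) (Fin n) F))
    (hdiag : ∀ A : Matrix (Fin n) (Fin n) F, (∀ i, A i i = 0) → A ∈ S) :
    (∃ A ∈ S, ∃ a b c : F, a ≠ b ∧ a ≠ c ∧ b ≠ c ∧
      A.charpoly.IsRoot a ∧ A.charpoly.IsRoot b ∧ A.charpoly.IsRoot c) ∧
    ¬ (∀ A ∈ S, ∃ a b : F, ∀ c : F, A.charpoly.IsRoot c → c = a ∨ c = b) := by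
  obtain ⟨a, b, c, hab, hac, hbc, hsum⟩ := exists_three_sum_zero hF
  set i0 : Fin n := ⟨0, by omega⟩ with hi0
  set i1 : Fin n := ⟨1, by omega⟩ with hi1
  set i2 : Fin n := ⟨2, by omega⟩ with hi2
  have h01 : i0 ≠ i1 := by simp [hi0, hi1, Fin.ext_iff]
  have h02 : i0 ≠ i2 := by simp [hi0, hi2, Fin.ext_iff]
  have h12 : i1 ≠ i2 := by simp [hi1, hi2, Fin.ext_iff]
  set x : F := a * b * c with hx
  set y : F := -(a * b + a * c + b * c) with hy
  set A : Matrix (Fin n) (Fin n) F := fun i j =>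
    if i = i0 ∧ j = i1 then 1
    else if i = i1 ∧ j = i2 then 1
    else if i = i2 ∧ j = i0 then x
    else if i = i2 ∧ j = i1 then y
    else 0 with hA
  have hAdiag : ∀ i, A i i = 0 := by
    intro i
    show (if i = i0 ∧ i = i1 then (1:F) else if i = i1 ∧ i = i2 then 1
      else if i = i2 ∧ i = i0 then x else if i = i2 ∧ i = i1 then y else 0) = 0
    rw [if_neg (fun h => h01 (h.1.symm.trans h.2)),
      if_neg (fun h => h12 (h.1.symm.trans h.2)),
      if_neg (fun h => h02 (h.2.symm.trans h.1)),
      if_neg (fun h => h12 (h.2.symm.trans h.1))]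
  have hAS : A ∈ S := hdiag A hAdiag
  -- eigenvectors
  have key : ∀ μ : F, μ ^ 3 = y * μ + x → A.charpoly.IsRoot μ := by
    intro μ hμ
    set v : Fin n → F := fun j => if j = i0 then 1 else if j = i1 then μ
      else if j = i2 then μ ^ 2 else 0 with hv
    have hvne : v ≠ 0 := by
      intro h
      have := congrFun h i0
      simp [hv] at this
    apply isRoot_charpoly_of_eigen A μ v hvne
    have hvsplit : v = Pi.single i0 1 + Pi.single i1 μ + Pi.single i2 (μ ^ 2) := by
      funext j
      simp only [Pi.add_apply, Pi.single_apply, hv]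
      by_cases hj0 : j = i0
      · subst hj0; simp [h01, h02]
      · by_cases hj1 : j = i1
        · subst hj1; simp [Ne.symm h01, h12]
        · by_cases hj2 : j = i2
          · subst hj2; simp [Ne.symm h02, Ne.symm h12]
          · simp [hj0, hj1, hj2]
    rw [hvsplit, Matrix.mulVec_add, Matrix.mulVec_add, Matrix.mulVec_single,
      Matrix.mulVec_single, Matrix.mulVec_single]
    funext i
    simp only [Pi.add_apply, Pi.smul_apply, smul_eq_mul, Matrix.col_apply]; simp only [hA]
    by_cases hi00 : i = i0
    · subst hi00
      simp [hv, h01, h02, Ne.symm h01, Ne.symm h02, Ne.symm h12, h12]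
    · by_cases hi11 : i = i1
      · subst hi11
        simp [hv, h01, h12, Ne.symm h01, Ne.symm h02, Ne.symm h12, h02]
        try ring
      · by_cases hi22 : i = i2
        · subst hi22
          simp [hv, h01, h02, h12, Ne.symm h01, Ne.symm h02, Ne.symm h12]
          linear_combination -hμ
        · simp [hv, hi00, hi11, hi22]
  have ra : A.charpoly.IsRoot a := key a (by rw [hy, hx]; linear_combination a ^ 2 * hsum)
  have rb : A.charpoly.IsRoot b := key b (by rw [hy, hx]; linear_combination b ^ 2 * hsum)
  have rc : A.charpoly.IsRoot c := key c (by rw [hy, hx]; linear_combination c ^ 2 * hsum)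
  refine ⟨⟨A, hAS, a, b, c, hab, hac, hbc, ra, rb, rc⟩, ?_⟩
  intro h
  obtain ⟨p, q, hpq⟩ := h A hAS
  rcases hpq a ra with h1 | h1 <;> rcases hpq b rb with h2 | h2 <;>
    rcases hpq c rc with h3 | h3 <;>
      first
        | exact hab (h1.trans h2.symm)
        | exact hac (h1.trans h3.symm)
        | exact hbc (h2.trans h3.symm)
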